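/- Let $g:\mathbb{R}\to\mathbb{R}^d$ be $C^2$, $G:\mathbb{R}^d\times\mathbb{R}\to\mathbb{R}$ be $C^1$ with $\partial_v G\ge 0$, and set $F(t,x,v)=G(x-g'(v)t,v)$. If there exist $(x_0,v_0)$ with $g''(v_0)\cdot\nabla_x G(x_0,v_0)>0$, then there exist $t>0$ and $x\in\mathbb{R}^d$ such that $\partial_v F(t,x,v_0)<0$; explicitly, any $t>\partial_v G(x_0,v_0)/(g''(v_0)\cdot\nabla_x G(x_0,v_0))$ and $x=x_0+g'(v_0)t$ works. -/

import Mathlib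

open Real Set

theorem stmt_1 {d : ℕ}
    (g : ℝ → EuclideanSpace ℝ (Fin d)) (hg : ContDiff ℝ 2 g)
    (G : EuclideanSpace ℝ (Fin d) × ℝ → ℝ) (hG : ContDiff ℝ 1 G)
    (gradG : EuclideanSpace ℝ (Fin d) → ℝ → EuclideanSpace ℝ (Fin d))
    (hgrad : ∀ x v, HasGradientAt (fun y => G (y, v)) (gradG x v) x)
    (Gv : EuclideanSpace ℝ (Fin d) → ℝ → ℝ)
    (hGv : ∀ x v, HasDerivAt (fun w => G (x, w)) (Gv x v) v)
    (hGv0 : ∀ x v, 0 ≤ Gv x v)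
    (x₀ : EuclideanSpace ℝ (Fin d)) (v₀ : ℝ)
    (hpos : 0 < (inner ℝ (deriv (deriv g) v₀) (gradG x₀ v₀) : ℝ)) :
    (∃ t > (0:ℝ), ∃ x : EuclideanSpace ℝ (Fin d),
        deriv (fun v => G (x - t • deriv g v, v)) v₀ < 0) ∧
    ∀ t : ℝ, Gv x₀ v₀ / (inner ℝ (deriv (deriv g) v₀) (gradG x₀ v₀) : ℝ) < t →
      deriv (fun v => G (x₀ + t • deriv g v₀ - t • deriv g v, v)) v₀ < 0 := by
  have hg1 : ContDiff ℝ 1 (deriv g) := by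
    have h2 : ContDiff ℝ ((1:ℕ) + 1) g := hg.of_le (by norm_num)
    exact (contDiff_succ_iff_deriv.mp h2).2.2
  have hgg : HasDerivAt (deriv g) (deriv (deriv g) v₀) v₀ :=
    (hg1.differentiable one_ne_zero v₀).hasDerivAt
  have hGd : HasFDerivAt G (fderiv ℝ G (x₀, v₀)) (x₀, v₀) :=
    (hG.differentiable one_ne_zero (x₀, v₀)).hasFDerivAt
  have hD1 : ∀ u : EuclideanSpace ℝ (Fin d),
      fderiv ℝ G (x₀, v₀) (u, 0) = (inner ℝ (gradG x₀ v₀) u : ℝ) := by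
    intro u
    have hincl : HasFDerivAt (fun y : EuclideanSpace ℝ (Fin d) => (y, v₀))
        ((ContinuousLinearMap.id ℝ (EuclideanSpace ℝ (Fin d))).prod 0) x₀ :=
      (hasFDerivAt_id x₀).prodMk (hasFDerivAt_const v₀ x₀)
    have hcomp : HasFDerivAt (fun y : EuclideanSpace ℝ (Fin d) => G (y, v₀))
        ((fderiv ℝ G (x₀, v₀)).comp
          ((ContinuousLinearMap.id ℝ (EuclideanSpace ℝ (Fin d))).prod 0)) x₀ :=
      hGd.comp x₀ hincl
    have heq := hcomp.unique (hgrad x₀ v₀).hasFDerivAt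
    have h := DFunLike.congr_fun heq u
    simpa [InnerProductSpace.toDual_apply_apply] using h
  have hD2 : fderiv ℝ G (x₀, v₀) (0, 1) = Gv x₀ v₀ := by
    have hincl : HasDerivAt (fun w : ℝ => ((x₀ : EuclideanSpace ℝ (Fin d)), w))
        ((0 : EuclideanSpace ℝ (Fin d)), (1:ℝ)) v₀ :=
      (hasDerivAt_const v₀ x₀).prodMk (hasDerivAt_id v₀)
    have hcomp : HasDerivAt (fun w : ℝ => G (x₀, w))
        (fderiv ℝ G (x₀, v₀) ((0 : EuclideanSpace ℝ (Fin d)), 1)) v₀ :=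
      hGd.comp_hasDerivAt v₀ hincl
    exact hcomp.unique (hGv x₀ v₀)
  have key : ∀ t : ℝ, deriv (fun v => G (x₀ + t • deriv g v₀ - t • deriv g v, v)) v₀
      = -t * (inner ℝ (deriv (deriv g) v₀) (gradG x₀ v₀) : ℝ) + Gv x₀ v₀ := by
    intro t
    have hφ1 : HasDerivAt (fun v => x₀ + t • deriv g v₀ - t • deriv g v)
        (-(t • deriv (deriv g) v₀)) v₀ := by
      simpa using (hgg.const_smul t).const_sub (x₀ + t • deriv g v₀)
    have hφ : HasDerivAt (fun v => (x₀ + t • deriv g v₀ - t • deriv g v, v))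
        ((-(t • deriv (deriv g) v₀), 1)) v₀ := hφ1.prodMk (hasDerivAt_id v₀)
    have hcomp : HasDerivAt (fun v => G (x₀ + t • deriv g v₀ - t • deriv g v, v))
        (fderiv ℝ G (x₀, v₀) ((-(t • deriv (deriv g) v₀), 1))) v₀ := by
      have h := (HasFDerivAt.comp
        (f := fun v => (x₀ + t • deriv g v₀ - t • deriv g v, v)) v₀
        (by simpa using hGd) hφ.hasFDerivAt).hasDerivAt
      exact HasFDerivAt.comp_hasDerivAt (f := fun v => (x₀ + t • deriv g v₀ - t • deriv g v, v)) v₀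
        (by simpa using hGd) hφ
    rw [hcomp.deriv]
    have hsplit : ((-(t • deriv (deriv g) v₀), (1:ℝ)) : EuclideanSpace ℝ (Fin d) × ℝ)
        = ((-(t • deriv (deriv g) v₀), 0) : EuclideanSpace ℝ (Fin d) × ℝ) + (0, 1) := by
      simp
    rw [hsplit, map_add, hD1, hD2, real_inner_comm, ← neg_smul, real_inner_smul_left]
    try ring
  have main : ∀ t : ℝ,
      Gv x₀ v₀ / (inner ℝ (deriv (deriv g) v₀) (gradG x₀ v₀) : ℝ) < t →
      deriv (fun v => G (x₀ + t • deriv g v₀ - t • deriv g v, v)) v₀ < 0 := by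
    intro t ht
    rw [key t]
    have h1 : Gv x₀ v₀ < t * (inner ℝ (deriv (deriv g) v₀) (gradG x₀ v₀) : ℝ) :=
      (div_lt_iff₀ hpos).mp ht
    linarith
  refine ⟨?_, main⟩
  have hnn : 0 ≤ Gv x₀ v₀ / (inner ℝ (deriv (deriv g) v₀) (gradG x₀ v₀) : ℝ) :=
    div_nonneg (hGv0 x₀ v₀) hpos.le
  refine ⟨Gv x₀ v₀ / (inner ℝ (deriv (deriv g) v₀) (gradG x₀ v₀) : ℝ) + 1,
    by linarith, x₀ + (Gv x₀ v₀ / (inner ℝ (deriv (deriv g) v₀) (gradG x₀ v₀) : ℝ) + 1)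
      • deriv g v₀, ?_⟩
  exact main _ (by linarith)
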